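/- Let ψ : 𝔻 → ℂ be holomorphic with |ψ(z)| ≤ 1 and ψ(z) ≠ 1 for all z ∈ 𝔻. If Re((ψ(z)+1)/(ψ(z)−1)) ≥ Re((z+1)/(z−1)) for all z ∈ 𝔻, then there exist a ∈ ℝ and b ∈ [0,1] such that (ψ(z)+1)/(ψ(z)−1) = ia + b·(z+1)/(z−1) for all z ∈ 𝔻. -/

import Mathlib

open Complex Metric

private lemma normSq_key (u v : ℂ) :
    Complex.normSq (u + (starRingEnd ℂ) v) = Complex.normSq (u - v) + 4 * u.re * v.re := by
  simp only [Complex.normSq_apply, Complex.add_re, Complex.add_im, Complex.sub_re,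
    Complex.sub_im, Complex.conj_re, Complex.conj_im]
  ring

private lemma re_div' (a b : ℂ) :
    (a / b).re = (a.re * b.re + a.im * b.im) / Complex.normSq b := by
  rw [Complex.div_re, ← add_div]

/-- Minimum principle: nonnegative real part vanishing somewhere vanishes everywhere. -/
private lemma re_eqOn_zero {Φ : ℂ → ℂ} {U : Set ℂ} (hU : IsOpen U) (hc : IsPreconnected U)
    (hd : DifferentiableOn ℂ Φ U) (h0 : ∀ w ∈ U, 0 ≤ (Φ w).re) {w0 : ℂ} (hw0 : w0 ∈ U)
    (hz : (Φ w0).re = 0) : ∀ w ∈ U, (Φ w).re = 0 := by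
  have hdexp : DifferentiableOn ℂ (fun w => Complex.exp (-Φ w)) U := hd.neg.cexp
  have hmax : IsMaxOn (norm ∘ fun w => Complex.exp (-Φ w)) U w0 := by
    intro w hw
    simp only [Set.mem_setOf_eq, Function.comp_apply, Complex.norm_exp, Complex.neg_re, hz,
      neg_zero, Real.exp_zero]
    have := h0 w hw
    calc Real.exp (-(Φ w).re) ≤ Real.exp 0 := Real.exp_le_exp.2 (by linarith)
    _ = 1 := Real.exp_zero
  have heq := Complex.eqOn_of_isPreconnected_of_isMaxOn_norm hc hU hdexp hw0 hmax
  intro w hw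
  have h1 : Complex.exp (-Φ w) = Complex.exp (-Φ w0) := heq hw
  have h2 : Real.exp (-(Φ w).re) = Real.exp 0 := by
    have := congrArg norm h1
    simpa [Complex.norm_exp, hz] using this
  have := Real.exp_injective h2
  linarith


private lemma const_of_re_eqOn_zero {Φ : ℂ → ℂ} {U : Set ℂ} (hU : IsOpen U)
    (hc : IsPreconnected U) (hd : DifferentiableOn ℂ Φ U)
    (h0 : ∀ w ∈ U, (Φ w).re = 0) {w0 : ℂ} (hw0 : w0 ∈ U) : ∀ w ∈ U, Φ w = Φ w0 := by
  rcases (hd.analyticOnNhd hU).is_constant_or_isOpen hc with ⟨v, hv⟩ | h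
  · intro w hw; rw [hv w hw, hv w0 hw0]
  · exfalso
    have hop : IsOpen (Φ '' U) := h U le_rfl hU
    obtain ⟨ε, hε, hball⟩ := Metric.isOpen_iff.1 hop _ ⟨w0, hw0, rfl⟩
    have hmem : Φ w0 + ((ε / 2 : ℝ) : ℂ) ∈ Φ '' U := by
      apply hball
      simp only [mem_ball, dist_eq_norm, add_sub_cancel_left, Complex.norm_real]
      rw [Real.norm_eq_abs, abs_of_pos (by linarith)]
      linarith
    obtain ⟨w, hw, hweq⟩ := hmem
    have h1 : (Φ w).re = 0 := h0 w hw
    have h2 : (Φ w0).re = 0 := h0 w0 hw0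
    rw [hweq] at h1
    simp only [Complex.add_re, Complex.ofReal_re, h2, zero_add] at h1
    linarith

private lemma abs_lt_abs_of_normSq (a b : ℂ) (h : Complex.normSq a < Complex.normSq b) :
    ‖a‖ < ‖b‖ := by
  rw [Complex.norm_def, Complex.norm_def]
  exact Real.sqrt_lt_sqrt (Complex.normSq_nonneg a) h

/-- Julia-type inequality: for Φ mapping the right half-plane into itself,
`Re Φ(x) ≤ 2 Re Φ(w) + Re Φ(w) |w - x|² / (x Re w)` for real `x > 0`. -/
private lemma schwarz_step {Φ : ℂ → ℂ}
    (hd : DifferentiableOn ℂ Φ {w : ℂ | 0 < w.re})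
    (hpos : ∀ w : ℂ, 0 < w.re → 0 < (Φ w).re)
    {w : ℂ} (hw : 0 < w.re) {x : ℝ} (hx : 0 < x) :
    (Φ ↑x).re ≤ 2 * (Φ w).re + (Φ w).re * Complex.normSq (w - ↑x) / (x * w.re) := by
  have hxU : (0:ℝ) < ((x : ℂ)).re := by simpa using hx
  set p := Φ ↑x with hp
  have hA : 0 < (Φ w).re := hpos w hw
  have hB : 0 < p.re := hpos _ hxU
  set M : ℂ → ℂ := fun ζ => ((x : ℂ) * (1 + ζ)) / (1 - ζ) with hM
  have hMden : ∀ ζ ∈ ball (0:ℂ) 1, (1 : ℂ) - ζ ≠ 0 := by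
    intro ζ hζ h
    rw [mem_ball_zero_iff] at hζ
    have : ζ = 1 := by linear_combination -h
    rw [this] at hζ; simp at hζ
  have hMmaps : ∀ ζ ∈ ball (0:ℂ) 1, 0 < (M ζ).re := by
    intro ζ hζ
    have hne := hMden ζ hζ
    have hnpos : 0 < Complex.normSq (1 - ζ) := Complex.normSq_pos.2 hne
    have hζ1 : Complex.normSq ζ < 1 := by
      rw [mem_ball_zero_iff] at hζ
      rw [← Complex.sq_norm]; nlinarith [norm_nonneg ζ]
    have hnum : ((x:ℂ) * (1 + ζ)).re * (1 - ζ).re + ((x:ℂ) * (1 + ζ)).im * (1 - ζ).im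
        = x * (1 - Complex.normSq ζ) := by
      simp only [Complex.mul_re, Complex.mul_im, Complex.add_re, Complex.add_im,
        Complex.sub_re, Complex.sub_im, Complex.one_re, Complex.one_im, Complex.ofReal_re,
        Complex.ofReal_im, Complex.normSq_apply]
      ring
    show 0 < (((x:ℂ) * (1 + ζ)) / (1 - ζ)).re
    rw [re_div', hnum]
    exact div_pos (mul_pos hx (by linarith)) hnpos
  have hMdiff : DifferentiableOn ℂ M (ball (0:ℂ) 1) := by
    apply DifferentiableOn.div
    · exact (Differentiable.differentiableOn (by fun_prop))
    · exact (Differentiable.differentiableOn (by fun_prop))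
    · exact hMden
  have hgdiff : DifferentiableOn ℂ (fun ζ => Φ (M ζ)) (ball (0:ℂ) 1) :=
    hd.comp hMdiff fun ζ hζ => hMmaps ζ hζ
  have hden : ∀ ζ ∈ ball (0:ℂ) 1, Φ (M ζ) + (starRingEnd ℂ) p ≠ 0 := by
    intro ζ hζ hcon
    have hkey := normSq_key (Φ (M ζ)) p
    rw [hcon] at hkey
    simp only [map_zero] at hkey
    have h1 := hpos _ (hMmaps ζ hζ)
    nlinarith [Complex.normSq_nonneg (Φ (M ζ) - p)]
  set s : ℂ → ℂ := fun ζ => (Φ (M ζ) - p) / (Φ (M ζ) + (starRingEnd ℂ) p) with hs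
  have hsdiff : DifferentiableOn ℂ s (ball (0:ℂ) 1) :=
    (hgdiff.sub_const p).div (hgdiff.add_const _) hden
  have hsmaps : Set.MapsTo s (ball (0:ℂ) 1) (ball (0:ℂ) 1) := by
    intro ζ hζ
    rw [mem_ball_zero_iff, hs]
    simp only [norm_div]
    have h1 := hpos _ (hMmaps ζ hζ)
    have hkey := normSq_key (Φ (M ζ)) p
    have habs : ‖Φ (M ζ) - p‖ < ‖Φ (M ζ) + (starRingEnd ℂ) p‖ := by
      apply abs_lt_abs_of_normSq
      nlinarith
    have : 0 < ‖Φ (M ζ) + (starRingEnd ℂ) p‖ :=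
      (norm_pos_iff.mpr (hden ζ hζ))
    exact div_lt_one this |>.2 habs
  have hs0 : s 0 = 0 := by
    have hM0 : M 0 = ↑x := by simp [hM]
    rw [hs]; simp only [hM0, ← hp, sub_self, zero_div]
  -- the point ζ0
  have hwx : w + ↑x ≠ 0 := by
    intro h
    have : (w + ↑x).re = 0 := by rw [h]; simp
    simp only [Complex.add_re, Complex.ofReal_re] at this
    linarith
  have hnsq : Complex.normSq (w + ↑x) = Complex.normSq (w - ↑x) + 4 * w.re * x := by
    have := normSq_key w ↑x
    rwa [Complex.conj_ofReal] at this
  set ζ0 : ℂ := (w - ↑x) / (w + ↑x) with hζ0def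
  have hζ0 : ‖ζ0‖ < 1 := by
    rw [hζ0def, norm_div]
    rw [div_lt_one (norm_pos_iff.mpr hwx)]
    apply abs_lt_abs_of_normSq
    nlinarith [mul_pos hw hx]
  have hζ0mem : ζ0 ∈ ball (0:ℂ) 1 := mem_ball_zero_iff.2 (by exact hζ0)
  have hMζ0 : M ζ0 = w := by
    have hc1 : (1:ℂ) + ζ0 = 2 * w / (w + ↑x) := by
      rw [hζ0def]; field_simp; ring
    have hc2 : (1:ℂ) - ζ0 = 2 * ↑x / (w + ↑x) := by
      rw [hζ0def]; field_simp; ring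
    have hxne : (x : ℂ) ≠ 0 := Complex.ofReal_ne_zero.2 hx.ne'
    rw [hM]; simp only [hc1, hc2]
    field_simp
  have hS := Complex.norm_le_norm_of_mapsTo_ball hsdiff (hsmaps.mono_right ball_subset_closedBall) hs0 hζ0
  rw [hs] at hS
  simp only [hMζ0] at hS
  rw [norm_div, norm_div] at hS
  have hdenw : Φ w + (starRingEnd ℂ) p ≠ 0 := by
    have := hden ζ0 hζ0mem; rwa [hMζ0] at this
  have hcross : ‖Φ w - p‖ * ‖w + ↑x‖
      ≤ ‖w - ↑x‖ * ‖Φ w + (starRingEnd ℂ) p‖ :=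
    (div_le_div_iff₀ (norm_pos_iff.mpr hdenw) (norm_pos_iff.mpr hwx)).1 hS
  have hsq : Complex.normSq (Φ w - p) * Complex.normSq (w + ↑x)
      ≤ Complex.normSq (w - ↑x) * Complex.normSq (Φ w + (starRingEnd ℂ) p) := by
    rw [← Complex.sq_norm, ← Complex.sq_norm, ← Complex.sq_norm, ← Complex.sq_norm]
    nlinarith [hcross, norm_nonneg (Φ w - p), norm_nonneg (w + (x:ℂ)),
      norm_nonneg (w - (x:ℂ)), norm_nonneg (Φ w + (starRingEnd ℂ) p),
      mul_nonneg (norm_nonneg (Φ w - p)) (norm_nonneg (w + (x:ℂ)))]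
  have hkey2 : Complex.normSq (Φ w + (starRingEnd ℂ) p)
      = Complex.normSq (Φ w - p) + 4 * (Φ w).re * p.re := normSq_key _ _
  set A := (Φ w).re
  set B := p.re
  set N := Complex.normSq (Φ w - p) with hN
  set m := Complex.normSq (w - ↑x) with hm
  rw [hnsq, hkey2] at hsq
  have hmain : N * (w.re * x) ≤ A * B * m := by nlinarith [hsq]
  have hNlb : (B - A) ^ 2 ≤ N := by
    rw [hN, Complex.normSq_apply]
    simp only [Complex.sub_re, Complex.sub_im]
    nlinarith [sq_nonneg ((Φ w).im - p.im)]
  have hfin : (B - A) ^ 2 * (w.re * x) ≤ A * B * m :=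
    le_trans (mul_le_mul_of_nonneg_right hNlb (le_of_lt (mul_pos hw hx))) hmain
  have hxr : 0 < x * w.re := mul_pos hx hw
  have hmnn : 0 ≤ m := Complex.normSq_nonneg _
  have hstep : B - 2 * A ≤ A * m / (x * w.re) := by
    rw [le_div_iff₀ hxr]
    nlinarith [hfin, mul_pos hA hB, mul_pos hB hxr, mul_pos hA hxr,
      mul_nonneg hA.le hmnn]
  rw [mul_div_assoc] at hstep
  rw [mul_div_assoc]
  linarith [hstep]

private lemma halfplane_lin {Φ : ℂ → ℂ}
    (hd : DifferentiableOn ℂ Φ {w : ℂ | 0 < w.re})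
    (h0 : ∀ w : ℂ, 0 < w.re → 0 ≤ (Φ w).re)
    (h1 : ∀ w : ℂ, 0 < w.re → (Φ w).re ≤ w.re) :
    ∃ c t : ℝ, 0 ≤ c ∧ c ≤ 1 ∧ ∀ w : ℂ, 0 < w.re → Φ w = ↑c * w + Complex.I * ↑t := by
  set U : Set ℂ := {w : ℂ | 0 < w.re} with hU
  have hUopen : IsOpen U := isOpen_lt continuous_const Complex.continuous_re
  have hUconn : IsPreconnected U := (convex_halfSpace_re_gt 0).isPreconnected
  have h1mem : (1:ℂ) ∈ U := by simp [hU]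
  have hmem : ∀ w : ℂ, w ∈ U ↔ 0 < w.re := fun w => Iff.rfl
  have main : ∃ c : ℝ, 0 ≤ c ∧ c ≤ 1 ∧ ∀ w ∈ U, (Φ w).re = c * w.re := by
    by_cases hA : ∃ w ∈ U, (Φ w).re = 0
    · obtain ⟨w0, hw0, hw0z⟩ := hA
      refine ⟨0, le_refl _, zero_le_one, ?_⟩
      intro w hw
      rw [re_eqOn_zero hUopen hUconn hd (fun w hw => h0 w hw) hw0 hw0z w hw]; ring
    by_cases hBq : ∃ w ∈ U, (Φ w).re = w.re
    · obtain ⟨w0, hw0, hw0z⟩ := hBq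
      refine ⟨1, zero_le_one, le_refl _, ?_⟩
      have hd2 : DifferentiableOn ℂ (fun w => w - Φ w) U := differentiableOn_id.sub hd
      have h02 : ∀ w ∈ U, 0 ≤ ((fun w => w - Φ w) w).re := by
        intro w hw; simp only [Complex.sub_re]; have := h1 w hw; linarith
      have hz2 : ((fun w => w - Φ w) w0).re = 0 := by
        simp only [Complex.sub_re, hw0z, sub_self]
      intro w hw
      have := re_eqOn_zero hUopen hUconn hd2 h02 hw0 hz2 w hw
      simp only [Complex.sub_re] at this; linarith
    push_neg at hA hBq
    have hposA : ∀ w : ℂ, 0 < w.re → 0 < (Φ w).re := fun w hw =>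
      lt_of_le_of_ne (h0 w hw) (Ne.symm (hA w hw))
    have hd2 : DifferentiableOn ℂ (fun w => w - Φ w) U := differentiableOn_id.sub hd
    have hposB : ∀ w : ℂ, 0 < w.re → 0 < ((fun w => w - Φ w) w).re := by
      intro w hw
      simp only [Complex.sub_re]
      rcases lt_or_eq_of_le (h1 w hw) with h | h
      · linarith
      · exact absurd h (hBq w hw)
    have claim : ∀ w1 ∈ U, ∀ w2 ∈ U, (Φ w2).re / w2.re ≤ (Φ w1).re / w1.re := by
      intro w1 hw1 w2 hw2
      have hr1 : 0 < w1.re := hw1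
      have hr2 : 0 < w2.re := hw2
      set A1 := (Φ w1).re with hA1
      set A2 := (Φ w2).re with hA2
      set A2' := w2.re - A2 with hA2'
      have hA1p : 0 < A1 := hposA w1 hr1
      have hA2p : 0 < A2' := by
        have := hposB w2 hr2; simpa only [Complex.sub_re] using this
      set Q : ℝ → ℝ := fun u => (2*A1 + 2*A2')*u
        + (A1/w1.re)*((w1.re*u - 1)^2 + (w1.im*u)^2)
        + (A2'/w2.re)*((w2.re*u - 1)^2 + (w2.im*u)^2) with hQ
      have hQc : Continuous Q := by fun_prop
      have hQ0 : Q 0 = A1/w1.re + A2'/w2.re := by simp [hQ]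
      have hgoal : (1:ℝ) ≤ A1/w1.re + A2'/w2.re := by
        rw [← hQ0]
        apply ge_of_tendsto ((hQc.tendsto 0).comp tendsto_inv_atTop_zero)
        filter_upwards [Filter.eventually_ge_atTop 1] with x hx1
        have hx : (0:ℝ) < x := by linarith
        have e1 := schwarz_step hd hposA hr1 hx
        have e2 := schwarz_step hd2 hposB hr2 hx
        have e2' : x - (Φ ↑x).re ≤ 2*A2' + A2' * Complex.normSq (w2 - ↑x)/(x*w2.re) := by
          simpa only [Complex.sub_re, Complex.ofReal_re] using e2
        have hn1 : Complex.normSq (w1 - ↑x) = (w1.re - x)^2 + w1.im^2 := by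
          simp only [Complex.normSq_apply, Complex.sub_re, Complex.sub_im,
            Complex.ofReal_re, Complex.ofReal_im, sub_zero]
          ring
        have hn2 : Complex.normSq (w2 - ↑x) = (w2.re - x)^2 + w2.im^2 := by
          simp only [Complex.normSq_apply, Complex.sub_re, Complex.sub_im,
            Complex.ofReal_re, Complex.ofReal_im, sub_zero]
          ring
        rw [hn1] at e1
        rw [hn2] at e2'
        have hsum : x ≤ 2*A1 + 2*A2' + A1*((w1.re - x)^2 + w1.im^2)/(x*w1.re)
            + A2'*((w2.re - x)^2 + w2.im^2)/(x*w2.re) := by linarith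
        show (1:ℝ) ≤ Q x⁻¹
        have hxne : x ≠ 0 := hx.ne'
        have hQx : Q x⁻¹ * x = 2*A1 + 2*A2' + A1*((w1.re - x)^2 + w1.im^2)/(x*w1.re)
            + A2'*((w2.re - x)^2 + w2.im^2)/(x*w2.re) := by
          rw [hQ]
          field_simp
        have hxQ : x ≤ Q x⁻¹ * x := hsum.trans_eq hQx.symm
        exact (le_mul_iff_one_le_left hx).1 hxQ
      have h' : A2'/w2.re = 1 - A2/w2.re := by field_simp; exact hA2'
      rw [h'] at hgoal
      linarith
    set c := (Φ 1).re with hc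
    have hone : (1:ℂ).re = 1 := Complex.one_re
    refine ⟨c, h0 1 h1mem, by simpa [hone] using h1 1 h1mem, ?_⟩
    intro w hw
    have hr : 0 < w.re := hw
    have hle1 := claim 1 h1mem w hw
    have hle2 := claim w hw 1 h1mem
    rw [hone, div_one] at hle1 hle2
    have : (Φ w).re / w.re = c := le_antisymm hle1 hle2
    rw [← this]
    field_simp
  obtain ⟨c, hc0, hc1, hlin⟩ := main
  set Ψ : ℂ → ℂ := fun w => Φ w - ↑c * w with hΨ
  have hdΨ : DifferentiableOn ℂ Ψ U := hd.sub (differentiable_id.const_mul _).differentiableOn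
  have hreΨ : ∀ w ∈ U, (Ψ w).re = 0 := by
    intro w hw
    simp only [hΨ, Complex.sub_re, Complex.mul_re, Complex.ofReal_re, Complex.ofReal_im,
      zero_mul, sub_zero, hlin w hw]
    ring
  have hconst := const_of_re_eqOn_zero hUopen hUconn hdΨ hreΨ h1mem
  have hΨ1 : Ψ 1 = Complex.I * ((Ψ 1).im : ℂ) := by
    apply Complex.ext
    · simp [hreΨ 1 h1mem]
    · simp
  refine ⟨c, (Ψ 1).im, hc0, hc1, ?_⟩
  intro w hw
  have h := hconst w hw
  rw [hΨ1] at h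
  simp only [hΨ] at h
  linear_combination h


private lemma re_frac_nonpos {u : ℂ} (h : ‖u‖ ≤ 1) (h1 : u ≠ 1) :
    ((u + 1) / (u - 1)).re ≤ 0 := by
  have hne : u - 1 ≠ 0 := sub_ne_zero.2 h1
  have hpos : 0 < Complex.normSq (u - 1) := Complex.normSq_pos.2 hne
  rw [re_div']
  have hnum : (u+1).re * (u-1).re + (u+1).im * (u-1).im = Complex.normSq u - 1 := by
    simp only [Complex.add_re, Complex.add_im, Complex.sub_re, Complex.sub_im,
      Complex.one_re, Complex.one_im, Complex.normSq_apply]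
    ring
  rw [hnum]
  apply div_nonpos_of_nonpos_of_nonneg _ hpos.le
  have : Complex.normSq u ≤ 1 := by rw [← Complex.sq_norm]; nlinarith [norm_nonneg u]
  linarith

private lemma mem_ball_of_re_pos {w : ℂ} (hw : 0 < w.re) :
    (w - 1) / (w + 1) ∈ ball (0:ℂ) 1 ∧ w + 1 ≠ 0 := by
  have hne : w + 1 ≠ 0 := by
    intro h
    have h' : (w+1).re = 0 := by rw [h]; simp
    simp only [Complex.add_re, Complex.one_re] at h'; linarith
  have hnsq : Complex.normSq (w + 1) = Complex.normSq (w - 1) + 4 * w.re * 1 := by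
    have := normSq_key w 1
    rwa [map_one, Complex.one_re] at this
  refine ⟨?_, hne⟩
  rw [mem_ball_zero_iff, norm_div, div_lt_one (norm_pos_iff.mpr hne)]
  exact abs_lt_abs_of_normSq _ _ (by nlinarith)

private lemma moebius_A {w : ℂ} (h : w + 1 ≠ 0) :
    ((w - 1)/(w + 1) + 1) / ((w - 1)/(w + 1) - 1) = -w := by
  have h1 : (w - 1)/(w + 1) + 1 = 2*w/(w+1) := by field_simp; ring
  have h2 : (w - 1)/(w + 1) - 1 = -2/(w+1) := by field_simp; ring
  rw [h1, h2]
  rw [div_div_div_eq]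
  field_simp

private lemma moebius_B {z : ℂ} (h : (1:ℂ) - z ≠ 0) :
    ((1+z)/(1-z) - 1) / ((1+z)/(1-z) + 1) = z := by
  have h1 : (1+z)/(1-z) - 1 = 2*z/(1-z) := by field_simp; ring
  have h2 : (1+z)/(1-z) + 1 = 2/(1-z) := by field_simp; norm_num
  rw [h1, h2]
  rw [div_div_div_eq]
  field_simp

private lemma re_pos_of_ball {z : ℂ} (hz : z ∈ ball (0:ℂ) 1) : 0 < ((1+z)/(1-z)).re := by
  have hz1 : ‖z‖ < 1 := by rwa [mem_ball_zero_iff] at hz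
  have hne : (1:ℂ) - z ≠ 0 := by
    intro h
    have : z = 1 := by linear_combination -h
    rw [this] at hz1; simp at hz1
  have hnsq : Complex.normSq z < 1 := by
    rw [← Complex.sq_norm]; nlinarith [norm_nonneg z]
  rw [re_div']
  have hnum : (1+z).re*(1-z).re + (1+z).im*(1-z).im = 1 - Complex.normSq z := by
    simp only [Complex.add_re, Complex.add_im, Complex.sub_re, Complex.sub_im,
      Complex.one_re, Complex.one_im, Complex.normSq_apply]
    ring
  rw [hnum]
  exact div_pos (by linarith) (Complex.normSq_pos.2 hne)

/-- A holomorphic self-map of the closed disc on `𝔻`, omitting the value `1`, satisfying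
`Re((ψ+1)/(ψ-1)) ≥ Re((z+1)/(z-1))` is of the form `(ψ+1)/(ψ-1) = ia + b (z+1)/(z-1)`. -/
theorem stmt_5 (ψ : ℂ → ℂ)
    (hdiff : DifferentiableOn ℂ ψ (ball (0 : ℂ) 1))
    (hcontr : ∀ z ∈ ball (0 : ℂ) 1, ‖ψ z‖ ≤ 1)
    (hne : ∀ z ∈ ball (0 : ℂ) 1, ψ z ≠ 1)
    (hineq : ∀ z ∈ ball (0 : ℂ) 1,
      ((z + 1) / (z - 1)).re ≤ ((ψ z + 1) / (ψ z - 1)).re) :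
    ∃ a b : ℝ, 0 ≤ b ∧ b ≤ 1 ∧ ∀ z ∈ ball (0 : ℂ) 1,
      (ψ z + 1) / (ψ z - 1) = Complex.I * (a : ℂ) + (b : ℂ) * ((z + 1) / (z - 1)) := by
  set Φ : ℂ → ℂ := fun w => -((ψ ((w - 1)/(w + 1)) + 1) / (ψ ((w - 1)/(w + 1)) - 1)) with hΦ
  have hmaps : ∀ w : ℂ, 0 < w.re → (w - 1)/(w + 1) ∈ ball (0:ℂ) 1 :=
    fun w hw => (mem_ball_of_re_pos hw).1
  have hne1 : ∀ w : ℂ, 0 < w.re → w + 1 ≠ 0 := fun w hw => (mem_ball_of_re_pos hw).2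
  have hdΦ : DifferentiableOn ℂ Φ {w : ℂ | 0 < w.re} := by
    have hm : DifferentiableOn ℂ (fun w : ℂ => (w - 1)/(w + 1)) {w : ℂ | 0 < w.re} := by
      apply DifferentiableOn.div
      · exact (differentiable_id.sub_const 1).differentiableOn
      · exact (differentiable_id.add_const 1).differentiableOn
      · exact fun w hw => hne1 w hw
    have hψm : DifferentiableOn ℂ (fun w : ℂ => ψ ((w - 1)/(w + 1))) {w : ℂ | 0 < w.re} :=
      hdiff.comp hm fun w hw => hmaps w hw
    exact ((hψm.add_const 1).div (hψm.sub_const 1)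
      fun w hw => sub_ne_zero.2 (hne _ (hmaps w hw))).neg
  have h0 : ∀ w : ℂ, 0 < w.re → 0 ≤ (Φ w).re := by
    intro w hw
    have hz := hmaps w hw
    have := re_frac_nonpos (hcontr _ hz) (hne _ hz)
    simp only [hΦ, Complex.neg_re]
    linarith
  have h1 : ∀ w : ℂ, 0 < w.re → (Φ w).re ≤ w.re := by
    intro w hw
    have hz := hmaps w hw
    have hq := hineq _ hz
    rw [moebius_A (hne1 w hw)] at hq
    simp only [hΦ, Complex.neg_re]
    simp only [Complex.neg_re] at hq
    linarith
  obtain ⟨c, t, hc0, hc1, hlin⟩ := halfplane_lin hdΦ h0 h1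
  refine ⟨-t, c, hc0, hc1, ?_⟩
  intro z hz
  have hz1 : ‖z‖ < 1 := by rwa [mem_ball_zero_iff] at hz
  have hzne : (1:ℂ) - z ≠ 0 := by
    intro h
    have : z = 1 := by linear_combination -h
    rw [this] at hz1; simp at hz1
  have hzne' : z - 1 ≠ 0 := by
    intro h
    have : z = 1 := by linear_combination h
    rw [this] at hz1; simp at hz1
  set w : ℂ := (1+z)/(1-z) with hwdef
  have hwre : 0 < w.re := re_pos_of_ball hz
  have hwz : (w - 1)/(w + 1) = z := moebius_B hzne
  have hΦw := hlin w hwre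
  simp only [hΦ, hwz] at hΦw
  have hnegw : -w = (z+1)/(z-1) := by
    rw [hwdef]
    field_simp
    ring
  push_cast
  rw [← hnegw]
  linear_combination -hΦw
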